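/- Let G be a word-hyperbolic group and H an infinite quasi-convex subgroup of G. Then H has finite index in its commensurator Comm_G(H) = {g ∈ G : gHg⁻¹ ∩ H has finite index in both H and gHg⁻¹}. -/

import Mathlib

open Pointwise

/-- Word length of `g` with respect to a (symmetrized) generating set `S`. -/
noncomputable def wordLength {G : Type} [Group G] (S : Set G) (g : G) : ℕ :=
  sInf {n : ℕ | g ∈ (S ∪ S⁻¹) ^ n}

/-- The Gromov product (based at the identity) with respect to the word metric for `S`. -/
noncomputable def gromovProd {G : Type} [Group G] (S : Set G) (x y : G) : ℝ :=
  ((wordLength S x : ℝ) + (wordLength S y : ℝ) - (wordLength S (x⁻¹ * y) : ℝ)) / 2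

/-- The word metric for `S` is `δ`-hyperbolic (Gromov four-point condition based at `1`). -/
def IsHyperbolicWith {G : Type} [Group G] (S : Set G) (δ : ℝ) : Prop :=
  ∀ x y z : G, min (gromovProd S x y) (gromovProd S y z) - δ ≤ gromovProd S x z

/-- `g` lies on a geodesic from `1` to `h` in the Cayley graph of `(G, S)`. -/
def OnGeodesic {G : Type} [Group G] (S : Set G) (g h : G) : Prop :=
  wordLength S g + wordLength S (g⁻¹ * h) = wordLength S h

/-- `H` is `k`-quasi-convex with respect to `S`: every geodesic of the Cayley graph of
`(G,S)` between `1` and an element of `H` stays in the `k`-neighborhood of `H`. -/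
def IsQuasiConvexWith {G : Type} [Group G] (S : Set G) (H : Subgroup G) (k : ℕ) : Prop :=
  ∀ h ∈ H, ∀ g : G, OnGeodesic S g h → ∃ h' ∈ H, wordLength S (g⁻¹ * h') ≤ k

namespace KS

variable {G : Type} [Group G] {S : Set G}

theorem symm_inv (S : Set G) : (S ∪ S⁻¹)⁻¹ = S ∪ S⁻¹ := by
  rw [Set.union_inv, inv_inv, Set.union_comm]

theorem exists_pow_mem (hgen : Subgroup.closure S = ⊤) (g : G) :
    ∃ n, g ∈ (S ∪ S⁻¹) ^ n := by
  have hg : g ∈ Subgroup.closure S := by rw [hgen]; trivial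
  induction hg using Subgroup.closure_induction with
  | mem x hx => exact ⟨1, by simpa using Or.inl hx⟩
  | one => exact ⟨0, by simp⟩
  | mul x y hx hy ihx ihy =>
    obtain ⟨m, hm⟩ := ihx; obtain ⟨n, hn⟩ := ihy
    exact ⟨m + n, by rw [pow_add]; exact Set.mul_mem_mul hm hn⟩
  | inv x hx ih =>
    obtain ⟨m, hm⟩ := ih
    refine ⟨m, ?_⟩
    have h2 : (x⁻¹ : G) ∈ ((S ∪ S⁻¹) ^ m)⁻¹ := by simpa using hm
    rwa [← inv_pow, symm_inv] at h2

theorem wl_le {g : G} {n : ℕ} (hn : g ∈ (S ∪ S⁻¹) ^ n) : wordLength S g ≤ n :=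
  Nat.sInf_le hn

theorem mem_pow_wl (hgen : Subgroup.closure S = ⊤) (g : G) :
    g ∈ (S ∪ S⁻¹) ^ (wordLength S g) := by
  obtain ⟨n, hn⟩ := exists_pow_mem hgen g
  exact Nat.sInf_mem (⟨n, hn⟩ : {m : ℕ | g ∈ (S ∪ S⁻¹) ^ m}.Nonempty)

@[simp] theorem wl_one : wordLength S (1 : G) = 0 :=
  Nat.le_zero.mp (wl_le (by simp))

theorem wl_inv (hgen : Subgroup.closure S = ⊤) (g : G) :
    wordLength S g⁻¹ = wordLength S g := by
  have key : ∀ x : G, wordLength S x⁻¹ ≤ wordLength S x := by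
    intro x
    have hx := mem_pow_wl hgen x
    have h2 : (x⁻¹ : G) ∈ ((S ∪ S⁻¹) ^ (wordLength S x))⁻¹ := by simpa using hx
    rw [← inv_pow, symm_inv] at h2
    exact wl_le h2
  exact le_antisymm (key g) (by simpa using key g⁻¹)

theorem wl_mul (hgen : Subgroup.closure S = ⊤) (x y : G) :
    wordLength S (x * y) ≤ wordLength S x + wordLength S y := by
  have := Set.mul_mem_mul (mem_pow_wl hgen x) (mem_pow_wl hgen y)
  rw [← pow_add] at this
  exact wl_le this

/-- triangle-type: `ℓ y ≤ ℓ x + ℓ (x⁻¹ y)`. -/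
theorem wl_tri (hgen : Subgroup.closure S = ⊤) (x y : G) :
    wordLength S y ≤ wordLength S x + wordLength S (x⁻¹ * y) := by
  simpa using wl_mul hgen x (x⁻¹ * y)

theorem ball_finite (hgen : Subgroup.closure S = ⊤) (hfin : S.Finite) (n : ℕ) :
    {g : G | wordLength S g ≤ n}.Finite := by
  have hT : (S ∪ S⁻¹).Finite := hfin.union hfin.inv
  have hpow : ∀ m : ℕ, ((S ∪ S⁻¹) ^ m).Finite := by
    intro m
    induction m with
    | zero => simp
    | succ p ih => rw [pow_succ]; exact ih.mul hT
  have hsub : {g : G | wordLength S g ≤ n} ⊆ ⋃ m ∈ Finset.range (n+1), (S ∪ S⁻¹) ^ m := by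
    intro g hg
    simp only [Set.mem_setOf_eq] at hg
    refine Set.mem_biUnion (by simp [Nat.lt_succ_iff.mpr hg] : wordLength S g ∈ Finset.range (n+1)) ?_
    exact mem_pow_wl hgen g
  exact Set.Finite.subset (Set.Finite.biUnion (Finset.range (n+1)).finite_toSet fun m _ => hpow m) hsub

/-- splitting a geodesic: a point at distance `i` along a geodesic from `1` to `u`. -/
theorem geod_point (hgen : Subgroup.closure S = ⊤) (u : G) {i : ℕ}
    (hi : i ≤ wordLength S u) :
    ∃ p : G, wordLength S p = i ∧ wordLength S (p⁻¹ * u) = wordLength S u - i ∧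
      wordLength S p + wordLength S (p⁻¹ * u) = wordLength S u := by
  set n := wordLength S u with hn
  have hu : u ∈ (S ∪ S⁻¹) ^ n := mem_pow_wl hgen u
  rw [show n = i + (n - i) by omega, pow_add] at hu
  obtain ⟨p, hp, r, hr, hpr⟩ := Set.mem_mul.mp hu
  have hpu : p⁻¹ * u = r := by rw [← hpr]; group
  have h1 : wordLength S p ≤ i := wl_le hp
  have h2 : wordLength S (p⁻¹ * u) ≤ n - i := by rw [hpu]; exact wl_le hr
  have h3 := wl_tri hgen p u
  refine ⟨p, by omega, by omega, by omega⟩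


theorem gp_base (w x y : G) :
    gromovProd S (w⁻¹ * x) (w⁻¹ * y)
      = ((wordLength S (w⁻¹*x) : ℝ) + (wordLength S (w⁻¹*y) : ℝ)
          - (wordLength S (x⁻¹*y) : ℝ)) / 2 := by
  have h : (w⁻¹*x)⁻¹ * (w⁻¹*y) = x⁻¹*y := by group
  rw [gromovProd, h]

/-- Distance from `w` to (a point on) a geodesic from `x` to `y` is at most the
Gromov product `⟨x,y⟩_w` plus `2δ+1`. -/
theorem dist_to_geodesic (hgen : Subgroup.closure S = ⊤) {δ : ℝ} (hδ : 0 ≤ δ)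
    (hhyp : IsHyperbolicWith S δ) (w x y : G) :
    ∃ q : G,
      wordLength S (x⁻¹*q) + wordLength S (q⁻¹*y) = wordLength S (x⁻¹*y) ∧
      (wordLength S (w⁻¹*q) : ℝ) ≤ gromovProd S (w⁻¹*x) (w⁻¹*y) + 2*δ + 1 := by
  set m₁ := wordLength S (w⁻¹*x) with hm₁
  set m₂ := wordLength S (w⁻¹*y) with hm₂
  set n := wordLength S (x⁻¹*y) with hn
  have t1 : m₂ ≤ m₁ + n := by
    have h := wl_tri hgen (w⁻¹*x) (w⁻¹*y)
    have e : (w⁻¹*x)⁻¹ * (w⁻¹*y) = x⁻¹*y := by group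
    rwa [e] at h
  have t2 : m₁ ≤ m₂ + n := by
    have h := wl_tri hgen (w⁻¹*y) (w⁻¹*x)
    have e : (w⁻¹*y)⁻¹ * (w⁻¹*x) = (x⁻¹*y)⁻¹ := by group
    rw [e, wl_inv hgen] at h
    exact h
  set i := (m₁ + n - m₂ + 1)/2 with hi
  have hin : i ≤ n := by omega
  have h2i₁ : m₁ + n - m₂ ≤ 2*i := by omega
  have h2i₂ : 2*i ≤ m₁ + n - m₂ + 1 := by omega
  obtain ⟨p, hp1, hp2, hp3⟩ := geod_point hgen (x⁻¹*y) hin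
  refine ⟨x * p, ?_, ?_⟩
  · have e1 : x⁻¹ * (x*p) = p := by group
    have e2 : (x*p)⁻¹ * y = p⁻¹ * (x⁻¹*y) := by group
    rw [e1, e2]; exact hp3
  · set q := x * p with hq
    set d := wordLength S (w⁻¹*q) with hd
    have exq : x⁻¹ * q = p := by rw [hq]; group
    have eqy : q⁻¹ * y = p⁻¹ * (x⁻¹*y) := by rw [hq]; group
    have hxq : wordLength S (x⁻¹*q) = i := by rw [exq]; exact hp1
    have hqy : wordLength S (q⁻¹*y) = n - i := by rw [eqy]; exact hp2
    have hA : gromovProd S (w⁻¹*x) (w⁻¹*q)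
        = ((m₁ : ℝ) + d - i) / 2 := by
      rw [gp_base, hxq]
    have hB : gromovProd S (w⁻¹*q) (w⁻¹*y)
        = ((d : ℝ) + m₂ - ((n : ℝ) - i)) / 2 := by
      rw [gp_base, hqy, Nat.cast_sub hin]
    have hyp := hhyp (w⁻¹*x) (w⁻¹*q) (w⁻¹*y)
    have h2i₁' : m₁ + n ≤ 2*i + m₂ := by omega
    have h2i₂' : 2*i + m₂ ≤ m₁ + n + 1 := by omega
    have hc1 : (m₁ : ℝ) + n ≤ 2*i + m₂ := by exact_mod_cast Nat.cast_le.mpr h2i₁'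
    have hc2 : (2*i : ℝ) + m₂ ≤ (m₁ : ℝ) + n + 1 := by exact_mod_cast Nat.cast_le.mpr h2i₂'
    have hAB : gromovProd S (w⁻¹*x) (w⁻¹*q) ≤ gromovProd S (w⁻¹*q) (w⁻¹*y) := by
      rw [hA, hB]; push_cast at hc1 ⊢; linarith
    have hmin : min (gromovProd S (w⁻¹*x) (w⁻¹*q)) (gromovProd S (w⁻¹*q) (w⁻¹*y))
        = gromovProd S (w⁻¹*x) (w⁻¹*q) := min_eq_left hAB
    rw [hmin] at hyp
    have hgp : gromovProd S (w⁻¹*x) (w⁻¹*y) = ((m₁:ℝ) + m₂ - n)/2 := gp_base w x y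
    rw [hA] at hyp
    rw [hgp] at hyp ⊢
    push_cast at hc1 hc2 ⊢
    linarith

theorem long_elt (hgen : Subgroup.closure S = ⊤) (hfin : S.Finite)
    {H : Subgroup G} (hinf : Infinite H) (N : ℕ) :
    ∃ h ∈ H, N ≤ wordLength S h := by
  by_contra hcon
  push_neg at hcon
  have hsub : (H : Set G) ⊆ {g : G | wordLength S g ≤ N} :=
    fun g hg => le_of_lt (hcon g hg)
  have hfinH : (H : Set G).Finite := (ball_finite hgen hfin N).subset hsub
  haveI : Finite H := hfinH.to_subtype
  exact not_finite H

theorem two_directions (hgen : Subgroup.closure S = ⊤) (hfin : S.Finite)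
    {H : Subgroup G} (hinf : Infinite H) {k : ℕ} (hqc : IsQuasiConvexWith S H k)
    (M : ℕ) :
    ∃ a ∈ H, ∃ b ∈ H, M ≤ wordLength S a ∧ M ≤ wordLength S b ∧
      gromovProd S a b ≤ (k : ℝ) := by
  obtain ⟨h, hH, hlen⟩ := long_elt hgen hfin hinf (2*M + 2*k + 2)
  set n := wordLength S h with hn
  set i := M + k + 1 with hi
  have hin : i ≤ n := by omega
  obtain ⟨p, hp1, hp2, hp3⟩ := geod_point hgen h hin
  obtain ⟨h₁, h₁H, hh₁⟩ := hqc h hH p hp3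
  -- basic length facts
  have hph : wordLength S (p⁻¹ * h) = n - i := hp2
  have l1 : wordLength S h₁ ≥ i - k := by
    have := wl_tri hgen h₁ p
    have e : wordLength S (h₁⁻¹ * p) = wordLength S (p⁻¹ * h₁) := by
      rw [← wl_inv hgen (p⁻¹ * h₁)]; congr 1; group
    -- ℓ p ≤ ℓ h₁ + ℓ (h₁⁻¹ p)
    have h2 := wl_tri hgen h₁ p
    rw [e] at h2
    omega
  have l2 : wordLength S (h₁⁻¹ * h) ≥ n - i - k := by
    have h2 := wl_mul hgen (p⁻¹ * h₁) (h₁⁻¹ * h)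
    have e : (p⁻¹ * h₁) * (h₁⁻¹ * h) = p⁻¹ * h := by group
    rw [e] at h2
    omega
  have l3 : wordLength S h₁ ≤ i + k := by
    have h2 := wl_mul hgen p (p⁻¹ * h₁)
    have e : p * (p⁻¹ * h₁) = h₁ := by group
    rw [e] at h2
    omega
  have l4 : wordLength S (h₁⁻¹ * h) ≤ k + (n - i) := by
    have h2 := wl_mul hgen (h₁⁻¹ * p) (p⁻¹ * h)
    have e : (h₁⁻¹ * p) * (p⁻¹ * h) = h₁⁻¹ * h := by group
    have e2 : wordLength S (h₁⁻¹ * p) = wordLength S (p⁻¹ * h₁) := by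
      rw [← wl_inv hgen (p⁻¹ * h₁)]; congr 1; group
    rw [e, e2] at h2
    omega
  refine ⟨h₁⁻¹, H.inv_mem h₁H, h₁⁻¹ * h, H.mul_mem (H.inv_mem h₁H) hH, ?_, ?_, ?_⟩
  · rw [wl_inv hgen]; omega
  · omega
  · have e : (h₁⁻¹)⁻¹ * (h₁⁻¹ * h) = h := by group
    rw [gromovProd, e, wl_inv hgen]
    have c1 : (wordLength S h₁ : ℝ) ≤ (i : ℝ) + k := by exact_mod_cast l3
    have c2 : (wordLength S (h₁⁻¹ * h) : ℝ) ≤ (k : ℝ) + ((n : ℝ) - i) := by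
      calc (wordLength S (h₁⁻¹ * h) : ℝ) ≤ ((k + (n - i) : ℕ) : ℝ) := by exact_mod_cast l4
        _ = (k : ℝ) + ((n:ℝ) - i) := by push_cast [Nat.cast_sub hin]; ring
    have c3 : ((i : ℝ)) + k + (k + ((n:ℝ) - i)) - n = 2*k := by ring
    linarith

theorem mem_conj_smul {H : Subgroup G} (g x : G) :
    x ∈ ConjAct.toConjAct g • H ↔ g⁻¹ * x * g ∈ H := by
  rw [Subgroup.mem_pointwise_smul_iff_inv_smul_mem]
  simp [ConjAct.smul_def, map_inv, ConjAct.ofConjAct_toConjAct, mul_assoc]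

theorem coset_bound {H : Subgroup G} {g : G}
    (hg : g ∈ Subgroup.Commensurable.commensurator H) :
    ∃ t : ℕ, ∀ a ∈ H, ∃ h ∈ H, wordLength S (h⁻¹ * (g * a)) ≤ t := by
  set A := ConjAct.toConjAct g • H with hA
  have hcomm : Subgroup.Commensurable A H := (Subgroup.Commensurable.commensurator_mem_iff H g).mp hg
  have hrel : H.relIndex A ≠ 0 := hcomm.2
  have hcard : Nat.card (A ⧸ H.subgroupOf A) ≠ 0 := hrel
  haveI hQ : Finite (A ⧸ H.subgroupOf A) := (Nat.card_ne_zero.mp hcard).2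
  haveI : Fintype (A ⧸ H.subgroupOf A) := Fintype.ofFinite _
  refine ⟨Finset.univ.sup (fun q : A ⧸ H.subgroupOf A =>
      wordLength S (((Quotient.out q : A) : G)⁻¹ * g)), ?_⟩
  intro a ha
  have hxA : (g * a⁻¹ * g⁻¹ : G) ∈ A := by
    rw [mem_conj_smul]
    have e : g⁻¹ * (g * a⁻¹ * g⁻¹) * g = a⁻¹ := by group
    rw [e]; exact H.inv_mem ha
  set x : A := ⟨g * a⁻¹ * g⁻¹, hxA⟩ with hx
  set q : A ⧸ H.subgroupOf A := QuotientGroup.mk x with hq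
  set y : A := Quotient.out q with hy
  have hmk : (QuotientGroup.mk y : A ⧸ H.subgroupOf A) = QuotientGroup.mk x := by
    rw [hy, hq]; exact QuotientGroup.out_eq' _
  have hmem : y⁻¹ * x ∈ H.subgroupOf A := QuotientGroup.eq.mp hmk
  have hk : ((y : G))⁻¹ * (g * a⁻¹ * g⁻¹) ∈ H := by
    have := Subgroup.mem_subgroupOf.mp hmem
    simpa using this
  refine ⟨g * a * g⁻¹ * (y : G), ?_, ?_⟩
  · have e : g * a * g⁻¹ * (y : G) = (((y : G))⁻¹ * (g * a⁻¹ * g⁻¹))⁻¹ := by group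
    rw [e]; exact H.inv_mem hk
  · have e : (g * a * g⁻¹ * (y : G))⁻¹ * (g * a) = ((y : G))⁻¹ * g := by group
    rw [e]
    exact Finset.le_sup (f := fun q : A ⧸ H.subgroupOf A =>
      wordLength S (((Quotient.out q : A) : G)⁻¹ * g)) (Finset.mem_univ q)

theorem wl_symm (hgen : Subgroup.closure S = ⊤) (u v : G) :
    wordLength S (u⁻¹ * v) = wordLength S (v⁻¹ * u) := by
  rw [← wl_inv hgen (u⁻¹ * v)]; congr 1; group

theorem gp_symm (hgen : Subgroup.closure S = ⊤) (u v : G) :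
    gromovProd S u v = gromovProd S v u := by
  rw [gromovProd, gromovProd, wl_symm hgen u v]; ring

theorem main_bound (hgen : Subgroup.closure S = ⊤) (hfin : S.Finite)
    {δ : ℝ} (hδ : 0 ≤ δ) (hhyp : IsHyperbolicWith S δ)
    {H : Subgroup G} (hinf : Infinite H) {k : ℕ} (hqc : IsQuasiConvexWith S H k)
    {g : G} (hg : g ∈ Subgroup.Commensurable.commensurator H) :
    ∃ h ∈ H, (wordLength S (g⁻¹ * h) : ℝ) ≤ 2*k + 6*δ + 2 := by
  obtain ⟨t, ht⟩ := coset_bound (S := S) hg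
  set M : ℕ := t + k + Nat.ceil (4*δ) + 3 with hM
  have hMr : (t:ℝ) + k + 4*δ + 3 ≤ (M : ℝ) := by
    have := Nat.le_ceil (4*δ); push_cast [hM]; linarith
  obtain ⟨a, haH, b, hbH, hMa, hMb, hab⟩ := two_directions hgen hfin hinf hqc M
  obtain ⟨q, hq_geo, hq_d⟩ := dist_to_geodesic hgen hδ hhyp g (g*a) (g*b)
  have e1 : g⁻¹ * (g*a) = a := by group
  have e2 : g⁻¹ * (g*b) = b := by group
  rw [e1, e2] at hq_d
  have hdq : (wordLength S (g⁻¹*q) : ℝ) ≤ (k:ℝ) + 2*δ + 1 := le_trans hq_d (by linarith)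
  obtain ⟨ha', ha'H, hta⟩ := ht a haH
  obtain ⟨hb', hb'H, htb⟩ := ht b hbH
  -- q is far from the endpoints g*a, g*b
  have hdqx : M ≤ wordLength S (g⁻¹*q) + wordLength S (q⁻¹*(g*a)) := by
    have h2 := wl_mul hgen (g⁻¹*q) (q⁻¹*(g*a))
    have e : (g⁻¹*q) * (q⁻¹*(g*a)) = a := by group
    rw [e] at h2; omega
  have hdqy : M ≤ wordLength S (g⁻¹*q) + wordLength S (q⁻¹*(g*b)) := by
    have h2 := wl_mul hgen (g⁻¹*q) (q⁻¹*(g*b))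
    have e : (g⁻¹*q) * (q⁻¹*(g*b)) = b := by group
    rw [e] at h2; omega
  have hdqxr : (t:ℝ) + 2*δ + 2 ≤ (wordLength S (q⁻¹*(g*a)) : ℝ) := by
    have h2 : (M:ℝ) ≤ (wordLength S (g⁻¹*q) : ℝ) + (wordLength S (q⁻¹*(g*a)) : ℝ) := by
      exact_mod_cast hdqx
    linarith
  have hdqyr : (t:ℝ) + 2*δ + 2 ≤ (wordLength S (q⁻¹*(g*b)) : ℝ) := by
    have h2 : (M:ℝ) ≤ (wordLength S (g⁻¹*q) : ℝ) + (wordLength S (q⁻¹*(g*b)) : ℝ) := by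
      exact_mod_cast hdqy
    linarith
  -- Gromov products at basepoint q
  have gpxy : gromovProd S (q⁻¹*(g*a)) (q⁻¹*(g*b)) = 0 := by
    rw [gp_base]
    have hsy : wordLength S (q⁻¹*(g*a)) = wordLength S ((g*a)⁻¹*q) := wl_symm hgen q (g*a)
    have hgeo' : (wordLength S ((g*a)⁻¹*q) : ℝ) + (wordLength S (q⁻¹*(g*b)) : ℝ)
        = (wordLength S ((g*a)⁻¹*(g*b)) : ℝ) := by exact_mod_cast hq_geo
    have hsyr : (wordLength S (q⁻¹*(g*a)) : ℝ) = (wordLength S ((g*a)⁻¹*q) : ℝ) := by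
      exact_mod_cast hsy
    linarith
  -- ⟨h_a', g*a⟩_q is large
  have gpa : (2*δ + 2 : ℝ) ≤ gromovProd S (q⁻¹*ha') (q⁻¹*(g*a)) := by
    rw [gp_base]
    have tri : wordLength S (q⁻¹*(g*a)) ≤ wordLength S (q⁻¹*ha') + wordLength S (ha'⁻¹*(g*a)) := by
      have h2 := wl_mul hgen (q⁻¹*ha') (ha'⁻¹*(g*a))
      have e : (q⁻¹*ha') * (ha'⁻¹*(g*a)) = q⁻¹*(g*a) := by group
      rwa [e] at h2
    have trir : (wordLength S (q⁻¹*(g*a)) : ℝ) ≤ (wordLength S (q⁻¹*ha') : ℝ) + (wordLength S (ha'⁻¹*(g*a)) : ℝ) := by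
      exact_mod_cast tri
    have htar : (wordLength S (ha'⁻¹*(g*a)) : ℝ) ≤ (t : ℝ) := by exact_mod_cast hta
    linarith
  have gpb : (2*δ + 2 : ℝ) ≤ gromovProd S (q⁻¹*hb') (q⁻¹*(g*b)) := by
    rw [gp_base]
    have tri : wordLength S (q⁻¹*(g*b)) ≤ wordLength S (q⁻¹*hb') + wordLength S (hb'⁻¹*(g*b)) := by
      have h2 := wl_mul hgen (q⁻¹*hb') (hb'⁻¹*(g*b))
      have e : (q⁻¹*hb') * (hb'⁻¹*(g*b)) = q⁻¹*(g*b) := by group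
      rwa [e] at h2
    have trir : (wordLength S (q⁻¹*(g*b)) : ℝ) ≤ (wordLength S (q⁻¹*hb') : ℝ) + (wordLength S (hb'⁻¹*(g*b)) : ℝ) := by
      exact_mod_cast tri
    have htbr : (wordLength S (hb'⁻¹*(g*b)) : ℝ) ≤ (t : ℝ) := by exact_mod_cast htb
    linarith
  -- first hyperbolicity application : ⟨g*a, h_b'⟩_q ≤ δ
  have hyp1 := hhyp (q⁻¹*(g*a)) (q⁻¹*hb') (q⁻¹*(g*b))
  rw [gpxy] at hyp1
  have hxb : gromovProd S (q⁻¹*(g*a)) (q⁻¹*hb') ≤ δ := by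
    rcases min_le_iff.mp (by linarith : min (gromovProd S (q⁻¹*(g*a)) (q⁻¹*hb'))
        (gromovProd S (q⁻¹*hb') (q⁻¹*(g*b))) ≤ δ) with h | h
    · exact h
    · linarith
  -- second hyperbolicity application : ⟨h_b', h_a'⟩_q ≤ 2δ
  have hyp2 := hhyp (q⁻¹*hb') (q⁻¹*ha') (q⁻¹*(g*a))
  have hsymm1 : gromovProd S (q⁻¹*hb') (q⁻¹*(g*a)) = gromovProd S (q⁻¹*(g*a)) (q⁻¹*hb') :=
    gp_symm hgen _ _
  rw [hsymm1] at hyp2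
  have hsymm2 : gromovProd S (q⁻¹*ha') (q⁻¹*(g*a)) = gromovProd S (q⁻¹*(g*a)) (q⁻¹*ha') :=
    gp_symm hgen _ _
  have hba : gromovProd S (q⁻¹*hb') (q⁻¹*ha') ≤ 2*δ := by
    rcases min_le_iff.mp (by linarith : min (gromovProd S (q⁻¹*hb') (q⁻¹*ha'))
        (gromovProd S (q⁻¹*ha') (q⁻¹*(g*a))) ≤ 2*δ) with h | h
    · exact h
    · linarith
  -- project q to a geodesic between h_a' and h_b'
  obtain ⟨q₂, hq₂_geo, hq₂_d⟩ := dist_to_geodesic hgen hδ hhyp q ha' hb'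
  have hsymm3 : gromovProd S (q⁻¹*ha') (q⁻¹*hb') = gromovProd S (q⁻¹*hb') (q⁻¹*ha') :=
    gp_symm hgen _ _
  rw [hsymm3] at hq₂_d
  have hq₂d' : (wordLength S (q⁻¹*q₂) : ℝ) ≤ 4*δ + 1 := by linarith
  -- quasiconvexity at q₂
  have h₀H : ha'⁻¹ * hb' ∈ H := H.mul_mem (H.inv_mem ha'H) hb'H
  have hgeo2 : OnGeodesic S (ha'⁻¹*q₂) (ha'⁻¹*hb') := by
    unfold OnGeodesic
    have e : (ha'⁻¹*q₂)⁻¹ * (ha'⁻¹*hb') = q₂⁻¹*hb' := by group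
    rw [e]; exact hq₂_geo
  obtain ⟨h', h'H, hh'⟩ := hqc (ha'⁻¹*hb') h₀H (ha'⁻¹*q₂) hgeo2
  refine ⟨ha' * h', H.mul_mem ha'H h'H, ?_⟩
  have hq₂h : wordLength S (q₂⁻¹ * (ha'*h')) ≤ k := by
    have e : (ha'⁻¹*q₂)⁻¹ * h' = q₂⁻¹ * (ha'*h') := by group
    rwa [e] at hh'
  -- assemble the final bound
  have fin1 := wl_mul hgen (g⁻¹*q) (q⁻¹*q₂)
  have ef1 : (g⁻¹*q) * (q⁻¹*q₂) = g⁻¹*q₂ := by group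
  rw [ef1] at fin1
  have fin2 := wl_mul hgen (g⁻¹*q₂) (q₂⁻¹*(ha'*h'))
  have ef2 : (g⁻¹*q₂) * (q₂⁻¹*(ha'*h')) = g⁻¹*(ha'*h') := by group
  rw [ef2] at fin2
  have c1 : (wordLength S (g⁻¹*q₂) : ℝ) ≤ (wordLength S (g⁻¹*q) : ℝ) + (wordLength S (q⁻¹*q₂) : ℝ) := by
    exact_mod_cast fin1
  have c2 : (wordLength S (g⁻¹*(ha'*h')) : ℝ) ≤ (wordLength S (g⁻¹*q₂) : ℝ) + (wordLength S (q₂⁻¹*(ha'*h')) : ℝ) := by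
    exact_mod_cast fin2
  have c3 : (wordLength S (q₂⁻¹*(ha'*h')) : ℝ) ≤ (k : ℝ) := by exact_mod_cast hq₂h
  linarith

end KS

/-- Kapovich–Short: an infinite quasi-convex subgroup `H` of a word-hyperbolic group `G`
has finite index in its commensurator
`Comm_G(H) = {g : gHg⁻¹ ∩ H has finite index in both H and gHg⁻¹}`. -/
theorem finiteIndex_in_commensurator_of_quasiconvex
    {G : Type} [Group G] (H : Subgroup G) (hinf : Infinite H)
    (S : Finset G) (hgen : Subgroup.closure (S : Set G) = ⊤)
    (δ : ℝ) (hδ : 0 ≤ δ) (hhyp : IsHyperbolicWith (S : Set G) δ)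
    (k : ℕ) (hqc : IsQuasiConvexWith (S : Set G) H k) :
    H.relIndex (Subgroup.Commensurable.commensurator H) ≠ 0 := by
  classical
  set C := Subgroup.Commensurable.commensurator H with hC
  have hfin : (S : Set G).Finite := S.finite_toSet
  set RN : ℕ := 2*k + Nat.ceil (6*δ) + 2 with hRN
  have hRNr : (2*(k:ℝ) + 6*δ + 2) ≤ (RN : ℝ) := by
    have := Nat.le_ceil (6*δ); push_cast [hRN]; linarith
  have bound : ∀ x : C, ∃ h ∈ H, wordLength (S : Set G) ((x : G) * h) ≤ RN := by
    intro x
    have hx : ((x : G))⁻¹ ∈ C := C.inv_mem x.2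
    obtain ⟨h, hH, hh⟩ := KS.main_bound hgen hfin hδ hhyp hinf hqc hx
    rw [inv_inv] at hh
    refine ⟨h, hH, ?_⟩
    have h2 : (wordLength (S:Set G) ((x:G)*h) : ℝ) ≤ (RN : ℝ) := le_trans hh hRNr
    exact_mod_cast h2
  have hball : {u : G | wordLength (S : Set G) u ≤ RN}.Finite :=
    KS.ball_finite hgen hfin RN
  haveI : Finite ↥{u : G | wordLength (S : Set G) u ≤ RN} := hball.to_subtype
  set f : (C ⧸ H.subgroupOf C) → ↥{u : G | wordLength (S : Set G) u ≤ RN} :=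
    fun c => ⟨((Quotient.out c : C) : G) * Classical.choose (bound (Quotient.out c)),
      (Classical.choose_spec (bound (Quotient.out c))).2⟩ with hf
  have hinj : Function.Injective f := by
    intro c₁ c₂ hfc
    set x₁ : C := Quotient.out c₁ with hx₁
    set x₂ : C := Quotient.out c₂ with hx₂
    set h₁ : G := Classical.choose (bound x₁) with hh₁
    set h₂ : G := Classical.choose (bound x₂) with hh₂
    have h₁H : h₁ ∈ H := (Classical.choose_spec (bound x₁)).1
    have h₂H : h₂ ∈ H := (Classical.choose_spec (bound x₂)).1
    have e : ((x₁ : G)) * h₁ = ((x₂ : G)) * h₂ := by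
      have := congrArg Subtype.val hfc
      simpa [hf, hx₁, hx₂, hh₁, hh₂] using this
    have e2 : (x₁:G)⁻¹ * (x₂:G) = h₁ * h₂⁻¹ := by
      calc (x₁:G)⁻¹ * (x₂:G) = (x₁:G)⁻¹ * ((x₂:G)*h₂) * h₂⁻¹ := by group
        _ = (x₁:G)⁻¹ * ((x₁:G)*h₁) * h₂⁻¹ := by rw [e]
        _ = h₁ * h₂⁻¹ := by group
    have hmemH : (x₁:G)⁻¹ * (x₂:G) ∈ H := by
      rw [e2]; exact H.mul_mem h₁H (H.inv_mem h₂H)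
    have hsub : x₁⁻¹ * x₂ ∈ H.subgroupOf C := by
      rw [Subgroup.mem_subgroupOf]
      simpa using hmemH
    calc c₁ = QuotientGroup.mk x₁ := (QuotientGroup.out_eq' c₁).symm
      _ = QuotientGroup.mk x₂ := QuotientGroup.eq.mpr hsub
      _ = c₂ := QuotientGroup.out_eq' c₂
  haveI : Finite (C ⧸ H.subgroupOf C) := Finite.of_injective f hinj
  show (H.subgroupOf C).index ≠ 0
  exact Subgroup.index_ne_zero_of_finite
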